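/- Let A be a bounded positive operator on H and S a closed subspace. If (A,S) is compatible (H = S + A^{-1}(S^⊥)), then A(S) is closed in R(A), i.e., the closure of A(S) intersected with R(A) equals A(S). -/

import Mathlib

open scoped InnerProductSpace
open ContinuousLinearMap

set_option synthInstance.maxHeartbeats 1000000 in
/-- If `A` is positive and `⟪A t, t⟫ = 0` then `A t = 0`. -/
lemma apply_eq_zero_of_inner_self_eq_zero {H : Type*} [NormedAddCommGroup H]
    [InnerProductSpace ℂ H] [CompleteSpace H] (A : H →L[ℂ] H) (hA : A.IsPositive)
    {t : H} (h : ⟪A t, t⟫_ℂ = 0) : A t = 0 := by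
  have hA' : 0 ≤ A := (ContinuousLinearMap.nonneg_iff_isPositive A).mpr hA
  set B := CFC.sqrt A with hB
  have hBnn : 0 ≤ B := CFC.sqrt_nonneg A
  have hBB : B * B = A := CFC.sqrt_mul_sqrt_self A hA'
  have hBsa : IsSelfAdjoint B := IsSelfAdjoint.of_nonneg hBnn
  have hsym := hBsa.isSymmetric
  have hApp : A t = B (B t) := by rw [← hBB]; rfl
  have h0 : ⟪B t, B t⟫_ℂ = 0 := by
    have h2 := hsym (B t) t
    simp only [ContinuousLinearMap.coe_coe] at h2
    rw [← h2, ← hApp, h]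
  have hBt : B t = 0 := inner_self_eq_zero.mp h0
  rw [hApp, hBt, map_zero]

/-- If `(A, S)` is compatible (`H = S + A⁻¹(S^⊥)`), then `A(S)` is closed in `R(A)`:
`closure (A S) ∩ R(A) = A S`. -/
theorem map_closed_in_range_of_compatible {H : Type*} [NormedAddCommGroup H]
    [InnerProductSpace ℂ H] [CompleteSpace H] (A : H →L[ℂ] H) (hA : A.IsPositive)
    (S : Submodule ℂ H) (hS : IsClosed (S : Set H))
    (hcompat : S ⊔ Sᗮ.comap (A : H →ₗ[ℂ] H) = ⊤) :
    (S.map (A : H →ₗ[ℂ] H)).topologicalClosure ⊓ LinearMap.range (A : H →ₗ[ℂ] H) = S.map (A : H →ₗ[ℂ] H) := by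
  apply le_antisymm
  · rintro y ⟨hy1, x, rfl⟩
    have hx : x ∈ S ⊔ Sᗮ.comap (A : H →ₗ[ℂ] H) := by rw [hcompat]; trivial
    obtain ⟨s, hs, t, ht, rfl⟩ := Submodule.mem_sup.mp hx
    have hAt : A t ∈ Sᗮ := ht
    have hAs : A s ∈ S.map (A : H →ₗ[ℂ] H) := ⟨s, hs, rfl⟩
    have hsym := hA.1
    -- t is orthogonal to A(S)
    have horth : t ∈ (S.map (A : H →ₗ[ℂ] H))ᗮ := by
      intro u hu
      obtain ⟨s', hs', rfl⟩ := hu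
      have : ⟪(A : H →ₗ[ℂ] H) s', t⟫_ℂ = ⟪s', (A : H →ₗ[ℂ] H) t⟫_ℂ := hsym s' t
      simp only [ContinuousLinearMap.coe_coe] at this
      rw [ContinuousLinearMap.coe_coe, this]
      exact (Submodule.mem_orthogonal _ _).mp hAt s' hs'
    -- hence t is orthogonal to the closure of A(S)
    have horth' : t ∈ ((S.map (A : H →ₗ[ℂ] H)).topologicalClosure)ᗮ := by
      intro u hu
      have hle : (S.map (A : H →ₗ[ℂ] H)).topologicalClosure ≤ (S.map (A : H →ₗ[ℂ] H))ᗮᗮ :=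
        Submodule.topologicalClosure_minimal _ (Submodule.le_orthogonal_orthogonal _)
          (Submodule.isClosed_orthogonal _)
      exact inner_eq_zero_symm.mp ((hle hu) t horth)
    -- A t lies in the closure of A(S)
    have hAt_cl : A t ∈ (S.map (A : H →ₗ[ℂ] H)).topologicalClosure := by
      have : A (s + t) - A s ∈ (S.map (A : H →ₗ[ℂ] H)).topologicalClosure :=
        Submodule.sub_mem _ hy1 (Submodule.le_topologicalClosure _ hAs)
      simpa [map_add] using this
    have h0 : ⟪A t, t⟫_ℂ = 0 := horth' (A t) hAt_cl
    have hAt0 : A t = 0 := apply_eq_zero_of_inner_self_eq_zero A hA h0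
    have : A (s + t) = A s := by rw [map_add, hAt0, add_zero]
    rw [ContinuousLinearMap.coe_coe, this]
    exact hAs
  · exact le_inf (Submodule.le_topologicalClosure _)
      (fun y ⟨x, hx, h⟩ => ⟨x, h⟩)
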